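/- Let K_4 be the kernel of ∇ = Σ_{i=1}^4 ∂/∂v_i restricted to the ring of symmetric polynomials in ℤ[v_1,…,v_4]. If f ∈ K_4 and 2f lies in the subring ℤ[α_2,α_3,α_4,α_6], then f itself lies in ℤ[α_2,α_3,α_4,α_6]. -/

import Mathlib

open MvPolynomial

noncomputable def sig (k : ℕ) : MvPolynomial (Fin 4) ℤ := esymm (Fin 4) ℤ k

noncomputable def alpha2 : MvPolynomial (Fin 4) ℤ := 8 * sig 2 - 3 * sig 1 ^ 2
noncomputable def alpha3 : MvPolynomial (Fin 4) ℤ := 8 * sig 3 - 4 * sig 1 * sig 2 + sig 1 ^ 3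
noncomputable def alpha4 : MvPolynomial (Fin 4) ℤ := 12 * sig 4 - 3 * sig 1 * sig 3 + sig 2 ^ 2
noncomputable def alpha6 : MvPolynomial (Fin 4) ℤ :=
  27 * sig 1 ^ 2 * sig 4 + 27 * sig 3 ^ 2 - 9 * sig 1 * sig 2 * sig 3
    - 72 * sig 2 * sig 4 + 2 * sig 2 ^ 3

namespace TwoFAux

noncomputable section

abbrev Pz4 := MvPolynomial (Fin 4) ℤ
abbrev Pz3 := MvPolynomial (Fin 3) ℤ
abbrev Q4 := MvPolynomial (Fin 4) (ZMod 2)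
abbrev Q3 := MvPolynomial (Fin 3) (ZMod 2)

def g' : Fin 4 → Pz4 := ![alpha3, alpha2, alpha4, alpha6]
def hv : Fin 3 → Pz4 := ![alpha2, alpha4, alpha6]

def Ev : Fin 4 → Q4 := fun i => esymm (Fin 4) (ZMod 2) (i + 1)
def HH : Fin 3 → Q4 :=
  ![X 0 ^ 2, X 0 * X 2 + X 1 ^ 2, X 0 ^ 2 * X 3 + X 2 ^ 2 + X 0 * X 1 * X 2]
def tau3 : Fin 3 → Q3 := ![X 0 ^ 2, X 1 ^ 2, X 0 ^ 2 * X 2]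

/-- exponent translation map -/
def T : (Fin 3 →₀ ℕ) →+ (Fin 3 →₀ ℕ) where
  toFun d := Finsupp.single 0 (2 * d 0 + 2 * d 2) + Finsupp.single 1 (2 * d 1)
      + Finsupp.single 2 (d 2)
  map_zero' := by simp
  map_add' a b := by
    ext j
    fin_cases j <;>
      simp [Finsupp.single_apply] <;> ring

lemma T_apply0 (d : Fin 3 →₀ ℕ) : T d 0 = 2 * d 0 + 2 * d 2 := by
  simp [T, Finsupp.single_apply]

lemma T_apply1 (d : Fin 3 →₀ ℕ) : T d 1 = 2 * d 1 := by
  simp [T, Finsupp.single_apply]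

lemma T_apply2 (d : Fin 3 →₀ ℕ) : T d 2 = d 2 := by
  simp [T, Finsupp.single_apply]

lemma T_inj : Function.Injective T := by
  intro a b hab
  have h0 : T a 0 = T b 0 := by rw [hab]
  have h1 : T a 1 = T b 1 := by rw [hab]
  have h2 : T a 2 = T b 2 := by rw [hab]
  rw [T_apply0, T_apply0] at h0
  rw [T_apply1, T_apply1] at h1
  rw [T_apply2, T_apply2] at h2
  ext j
  fin_cases j
  · show a 0 = b 0; omega
  · show a 1 = b 1; omega
  · show a 2 = b 2; omega

lemma tau3_hom_eq :
    (MvPolynomial.aeval tau3 : Q3 →ₐ[ZMod 2] Q3).toRingHom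
      = AddMonoidAlgebra.mapDomainRingHom (ZMod 2) T := by
  apply MvPolynomial.ringHom_ext
  · intro r
    show aeval tau3 (C r) = AddMonoidAlgebra.mapDomainRingHom (ZMod 2) T (C r)
    rw [aeval_C, AddMonoidAlgebra.mapDomainRingHom_apply]
    show _ = AddMonoidAlgebra.mapDomain (⇑T) (monomial 0 r)
    rw [← single_eq_monomial, AddMonoidAlgebra.mapDomain_single, map_zero, single_eq_monomial]
    rfl
  · intro i
    show aeval tau3 (X i) = AddMonoidAlgebra.mapDomainRingHom (ZMod 2) T (X i)
    rw [aeval_X, AddMonoidAlgebra.mapDomainRingHom_apply]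
    show _ = AddMonoidAlgebra.mapDomain (⇑T) (monomial (Finsupp.single i 1) 1)
    rw [← single_eq_monomial, AddMonoidAlgebra.mapDomain_single]
    fin_cases i
    · show tau3 0 = AddMonoidAlgebra.single (T (Finsupp.single (0 : Fin 3) 1)) (1 : ZMod 2)
      have : T (Finsupp.single 0 1) = Finsupp.single 0 2 := by
        ext j
        fin_cases j
        · show T (Finsupp.single 0 1) 0 = _; rw [T_apply0]; simp [Finsupp.single_apply]
        · show T (Finsupp.single 0 1) 1 = _; rw [T_apply1]; simp [Finsupp.single_apply]
        · show T (Finsupp.single 0 1) 2 = _; rw [T_apply2]; simp [Finsupp.single_apply]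
      rw [this, single_eq_monomial, ← X_pow_eq_monomial]
      rfl
    · show tau3 1 = AddMonoidAlgebra.single (T (Finsupp.single (1 : Fin 3) 1)) (1 : ZMod 2)
      have : T (Finsupp.single 1 1) = Finsupp.single 1 2 := by
        ext j
        fin_cases j
        · show T (Finsupp.single 1 1) 0 = _; rw [T_apply0]; simp [Finsupp.single_apply]
        · show T (Finsupp.single 1 1) 1 = _; rw [T_apply1]; simp [Finsupp.single_apply]
        · show T (Finsupp.single 1 1) 2 = _; rw [T_apply2]; simp [Finsupp.single_apply]
      rw [this, single_eq_monomial, ← X_pow_eq_monomial]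
      rfl
    · show tau3 2 = AddMonoidAlgebra.single (T (Finsupp.single (2 : Fin 3) 1)) (1 : ZMod 2)
      have : T (Finsupp.single 2 1) = Finsupp.single 0 2 + Finsupp.single 2 1 := by
        ext j
        fin_cases j
        · show T (Finsupp.single 2 1) 0 = _; rw [T_apply0]; simp [Finsupp.single_apply]
        · show T (Finsupp.single 2 1) 1 = _; rw [T_apply1]; simp [Finsupp.single_apply]
        · show T (Finsupp.single 2 1) 2 = _; rw [T_apply2]; simp [Finsupp.single_apply]
      have h22 : (X 0 ^ 2 * X 2 : Q3)
          = monomial ((Finsupp.single 0 2) + (Finsupp.single 2 1)) 1 := by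
        rw [X_pow_eq_monomial, ← pow_one (X 2 : Q3), X_pow_eq_monomial, monomial_mul, one_mul]
      rw [this, single_eq_monomial, ← h22]
      rfl

lemma tau3_inj (p : Q3) (hp : aeval tau3 p = 0) : p = 0 := by
  have h1 : AddMonoidAlgebra.mapDomainRingHom (ZMod 2) T p = 0 := by
    rw [← tau3_hom_eq]; exact hp
  rw [AddMonoidAlgebra.mapDomainRingHom_apply] at h1
  exact AddMonoidAlgebra.mapDomain_injective T_inj (by rw [h1, AddMonoidAlgebra.mapDomain_zero])


lemma Ev_inj (p : Q4) (hp : aeval Ev p = 0) : p = 0 := by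
  have hinj : Function.Injective (esymmAlgHom (Fin 4) (ZMod 2) 4) :=
    esymmAlgHom_injective (ZMod 2) (by simp)
  have : esymmAlgHom (Fin 4) (ZMod 2) 4 p = esymmAlgHom (Fin 4) (ZMod 2) 4 0 := by
    apply Subtype.ext
    rw [esymmAlgHom_apply, esymmAlgHom_apply]
    rw [map_zero]; exact hp
  exact hinj this

/-- evaluation sending the `y` variables to `![X 0, X 1, 0, X 2]`. -/
def theta : Q4 →ₐ[ZMod 2] Q3 := aeval ![X 0, X 1, 0, X 2]

lemma theta_HH : (fun j => theta (HH j)) = tau3 := by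
  funext j
  fin_cases j
  · show theta (HH 0) = tau3 0
    simp [theta, HH, tau3]
  · show theta (HH 1) = tau3 1
    simp [theta, HH, tau3]
  · show theta (HH 2) = tau3 2
    simp [theta, HH, tau3]

lemma HH_inj (p : Q3) (hp : aeval HH p = 0) : p = 0 := by
  apply tau3_inj
  have := MvPolynomial.comp_aeval_apply theta (f := HH) p
  rw [theta_HH] at this
  rw [← this, hp, map_zero]

/-- the parity ring `W`. -/
abbrev W := AddMonoidAlgebra Q4 (ZMod 2)

def w4 : Fin 4 → W :=
  ![AddMonoidAlgebra.single 1 (X 0), AddMonoidAlgebra.single 0 (X 1),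
    AddMonoidAlgebra.single 1 (X 2), AddMonoidAlgebra.single 0 (X 3)]

/-- parity morphism -/
def psi : Q4 →ₐ[ZMod 2] W := aeval w4

def j0 : Q4 →ₐ[ZMod 2] W := AddMonoidAlgebra.singleZeroAlgHom

lemma j0_apply (x : Q4) : j0 x = AddMonoidAlgebra.single 0 x := rfl

lemma psi_HH (j : Fin 3) : psi (HH j) = AddMonoidAlgebra.single 0 (HH j) := by
  have e0 : w4 0 = AddMonoidAlgebra.single 1 (X 0) := rfl
  have e1 : w4 1 = AddMonoidAlgebra.single 0 (X 1) := rfl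
  have e2 : w4 2 = AddMonoidAlgebra.single 1 (X 2) := rfl
  have e3 : w4 3 = AddMonoidAlgebra.single 0 (X 3) := rfl
  fin_cases j
  · show psi (X 0 ^ 2) = AddMonoidAlgebra.single 0 (HH 0)
    simp only [psi, map_pow, aeval_X, e0, AddMonoidAlgebra.single_pow,
      show ((2 : ℕ) • (1 : ZMod 2)) = 0 by decide]
    rfl
  · show psi (X 0 * X 2 + X 1 ^ 2) = AddMonoidAlgebra.single 0 (HH 1)
    simp only [psi, map_add, map_mul, map_pow, aeval_X, e0, e1, e2,
      AddMonoidAlgebra.single_pow, AddMonoidAlgebra.single_mul_single,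
      show ((1 : ZMod 2) + 1) = 0 by decide, show ((2 : ℕ) • (0 : ZMod 2)) = 0 by decide]
    rw [← AddMonoidAlgebra.single_add]
    rfl
  · show psi (X 0 ^ 2 * X 3 + X 2 ^ 2 + X 0 * X 1 * X 2) = AddMonoidAlgebra.single 0 (HH 2)
    simp only [psi, map_add, map_mul, map_pow, aeval_X, e0, e1, e2, e3,
      AddMonoidAlgebra.single_pow, AddMonoidAlgebra.single_mul_single,
      show ((2 : ℕ) • (1 : ZMod 2)) = 0 by decide,
      show ((2 : ℕ) • (0 : ZMod 2)) = 0 by decide,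
      show ((0 : ZMod 2) + 0) = 0 by decide,
      show ((1 : ZMod 2) + 0) = 1 by decide,
      show ((1 : ZMod 2) + 1) = 0 by decide,
      show ((0 : ZMod 2) + 1) = 1 by decide]
    rw [← AddMonoidAlgebra.single_add, ← AddMonoidAlgebra.single_add]
    rfl

lemma key2 (p q : Q3)
    (hrel : aeval HH p + aeval HH q * (X 0 : Q4) ^ 3 = 0) : p = 0 ∧ q = 0 := by
  have hpsi : ∀ r : Q3, psi (aeval HH r) = AddMonoidAlgebra.single 0 (aeval HH r) := by
    intro r
    rw [MvPolynomial.comp_aeval_apply psi (f := HH) r]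
    have : (fun j => psi (HH j)) = fun j => j0 (HH j) := by
      funext j; rw [psi_HH, j0_apply]
    rw [this, ← MvPolynomial.comp_aeval_apply j0 (f := HH) r, j0_apply]
  have h0 := congrArg psi hrel
  rw [map_add, map_zero, map_mul, map_pow, hpsi, hpsi] at h0
  have hX0 : psi (X (0 : Fin 4)) = AddMonoidAlgebra.single 1 (X 0) := by
    rw [psi, aeval_X]; rfl
  rw [hX0, AddMonoidAlgebra.single_pow, AddMonoidAlgebra.single_mul_single,
    show ((3 : ℕ) • (1 : ZMod 2)) = 1 by decide,
    show ((0 : ZMod 2) + 1) = 1 by decide] at h0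
  -- single 0 A + single 1 B = 0
  have hsingle : AddMonoidAlgebra.single (0 : ZMod 2) (aeval HH p)
      = AddMonoidAlgebra.single (1 : ZMod 2) (-(aeval HH q * (X 0 : Q4) ^ 3)) := by
    rw [AddMonoidAlgebra.single_neg]
    exact eq_neg_of_add_eq_zero_left h0
  rcases AddMonoidAlgebra.single_inj.mp hsingle with h | h
  · exact absurd h.1 (by decide)
  refine ⟨HH_inj p h.1, HH_inj q ?_⟩
  have h2 : aeval HH q * (X 0 : Q4) ^ 3 = 0 := by
    have := h.2
    rwa [neg_eq_zero] at this
  rcases mul_eq_zero.mp h2 with h' | h'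
  · exact h'
  · exact absurd h' (pow_ne_zero _ (MvPolynomial.X_ne_zero 0))


def pi4 : Pz4 →+* Q4 := MvPolynomial.map (Int.castRingHom (ZMod 2))
def pi3 : Pz3 →+* Q3 := MvPolynomial.map (Int.castRingHom (ZMod 2))

lemma two_Q4 : (2 : Q4) = 0 := by
  have h1 : ((2 : ℕ) : Q4) = 0 := CharP.cast_eq_zero Q4 2
  exact_mod_cast h1

lemma pi4_sig (k : ℕ) : pi4 (sig k) = esymm (Fin 4) (ZMod 2) k := by
  rw [sig, pi4, map_esymm]

lemma pi4_alpha2 : pi4 alpha2 = aeval Ev (HH 0) := by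
  have : aeval Ev (HH 0) = esymm (Fin 4) (ZMod 2) 1 ^ 2 := by
    show aeval Ev (X 0 ^ 2) = _
    rw [map_pow, aeval_X]
    rfl
  rw [this, alpha2]
  push_cast [map_sub, map_mul, map_pow, map_ofNat, pi4_sig]
  linear_combination (4 * esymm (Fin 4) (ZMod 2) 2 - 2 * esymm (Fin 4) (ZMod 2) 1 ^ 2) * two_Q4

lemma pi4_alpha3 : pi4 alpha3 = aeval Ev ((X 0 : Q4) ^ 3) := by
  have : aeval Ev ((X 0 : Q4) ^ 3) = esymm (Fin 4) (ZMod 2) 1 ^ 3 := by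
    rw [map_pow, aeval_X]
    rfl
  rw [this, alpha3]
  push_cast [map_add, map_sub, map_mul, map_pow, map_ofNat, pi4_sig]
  linear_combination (4 * esymm (Fin 4) (ZMod 2) 3
    - 2 * esymm (Fin 4) (ZMod 2) 1 * esymm (Fin 4) (ZMod 2) 2) * two_Q4

lemma pi4_alpha4 : pi4 alpha4 = aeval Ev (HH 1) := by
  have : aeval Ev (HH 1) = esymm (Fin 4) (ZMod 2) 1 * esymm (Fin 4) (ZMod 2) 3
      + esymm (Fin 4) (ZMod 2) 2 ^ 2 := by
    show aeval Ev (X 0 * X 2 + X 1 ^ 2) = _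
    rw [map_add, map_mul, map_pow, aeval_X, aeval_X, aeval_X]
    rfl
  rw [this, alpha4]
  push_cast [map_add, map_sub, map_mul, map_pow, map_ofNat, pi4_sig]
  linear_combination (6 * esymm (Fin 4) (ZMod 2) 4
    - 2 * esymm (Fin 4) (ZMod 2) 1 * esymm (Fin 4) (ZMod 2) 3) * two_Q4

lemma pi4_alpha6 : pi4 alpha6 = aeval Ev (HH 2) := by
  have : aeval Ev (HH 2) = esymm (Fin 4) (ZMod 2) 1 ^ 2 * esymm (Fin 4) (ZMod 2) 4
      + esymm (Fin 4) (ZMod 2) 3 ^ 2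
      + esymm (Fin 4) (ZMod 2) 1 * esymm (Fin 4) (ZMod 2) 2 * esymm (Fin 4) (ZMod 2) 3 := by
    show aeval Ev (X 0 ^ 2 * X 3 + X 2 ^ 2 + X 0 * X 1 * X 2) = _
    rw [map_add, map_add, map_mul, map_mul, map_mul, map_pow, map_pow,
      aeval_X, aeval_X, aeval_X, aeval_X]
    rfl
  rw [this, alpha6]
  push_cast [map_add, map_sub, map_mul, map_pow, map_ofNat, pi4_sig]
  linear_combination (13 * esymm (Fin 4) (ZMod 2) 1 ^ 2 * esymm (Fin 4) (ZMod 2) 4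
    + 13 * esymm (Fin 4) (ZMod 2) 3 ^ 2
    - 5 * esymm (Fin 4) (ZMod 2) 1 * esymm (Fin 4) (ZMod 2) 2 * esymm (Fin 4) (ZMod 2) 3
    - 36 * esymm (Fin 4) (ZMod 2) 2 * esymm (Fin 4) (ZMod 2) 4
    + esymm (Fin 4) (ZMod 2) 2 ^ 3) * two_Q4

lemma pi3_X (i : Fin 3) : pi3 (X i) = X i := map_X _ i

lemma pi4_aeval_hv (r : Pz3) :
    pi4 (aeval hv r) = aeval (fun i => pi4 (hv i)) (pi3 r) := by
  induction r using MvPolynomial.induction_on with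
  | C a =>
    rw [aeval_C, pi3, map_C, aeval_C]
    simp [pi4, algebraMap_eq, map_C]
  | add p q hp hq =>
    rw [map_add, map_add, map_add, hp, hq, map_add]
  | mul_X p i hp =>
    simp only [map_mul, aeval_X, pi3_X, hp]

lemma dvd_of_pi3_eq_zero (r : Pz3) (hr : pi3 r = 0) : ∃ s : Pz3, r = 2 * s := by
  have h2 : (C (2 : ℤ) : Pz3) ∣ r := by
    rw [MvPolynomial.C_dvd_iff_dvd_coeff]
    intro m
    have : coeff m (pi3 r) = 0 := by rw [hr]; rfl
    rw [pi3, MvPolynomial.coeff_map] at this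
    exact (ZMod.intCast_zmod_eq_zero_iff_dvd _ 2).mp this
  obtain ⟨s, hs⟩ := h2
  exact ⟨s, by rw [hs, map_ofNat]⟩

lemma key3 (r0 r1 : Pz3) (w : Pz4)
    (heq : aeval hv r0 + aeval hv r1 * alpha3 = 2 * w) :
    ∃ s0 s1 : Pz3, r0 = 2 * s0 ∧ r1 = 2 * s1 := by
  have hvE : (fun i => pi4 (hv i)) = fun i => aeval Ev (HH i) := by
    funext i
    fin_cases i
    · exact pi4_alpha2
    · exact pi4_alpha4
    · exact pi4_alpha6
  have h0 := congrArg pi4 heq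
  rw [map_add, map_mul, map_mul, pi4_aeval_hv, pi4_aeval_hv, pi4_alpha3, hvE,
    show pi4 2 = 2 by rw [map_ofNat], two_Q4, zero_mul] at h0
  rw [← MvPolynomial.comp_aeval_apply (aeval Ev) (f := HH) (pi3 r0),
    ← MvPolynomial.comp_aeval_apply (aeval Ev) (f := HH) (pi3 r1), ← map_mul, ← map_add] at h0
  have hinner : aeval HH (pi3 r0) + aeval HH (pi3 r1) * (X 0 : Q4) ^ 3 = 0 :=
    Ev_inj _ h0
  obtain ⟨hp, hq⟩ := key2 _ _ hinner
  obtain ⟨s0, hs0⟩ := dvd_of_pi3_eq_zero _ hp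
  obtain ⟨s1, hs1⟩ := dvd_of_pi3_eq_zero _ hq
  exact ⟨s0, s1, hs0, hs1⟩


def Gv : Pz4 := 14 * alpha3 ^ 2 - 24 * (alpha2 * alpha4) - 32 * alpha6

lemma idA : alpha3 ^ 2 - alpha2 ^ 3 = 2 * Gv := by
  simp only [Gv, alpha2, alpha3, alpha4, alpha6]
  ring

/-- the evaluation from `ℤ[x0,x1,x2][X]`, sending `X` to `alpha3`. -/
def Fh : Polynomial Pz3 →+* Pz4 :=
  Polynomial.eval₂RingHom ((aeval hv : Pz3 →ₐ[ℤ] Pz4) : Pz3 →+* Pz4) alpha3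

lemma Fh_C (a : Pz3) : Fh (Polynomial.C a) = aeval hv a := Polynomial.eval₂_C _ _

lemma Fh_X : Fh Polynomial.X = alpha3 := Polynomial.eval₂_X _ _

lemma Fh_finSuccEquiv (p : Pz4) : Fh (finSuccEquiv ℤ 3 p) = aeval g' p := by
  have hhom : Fh.comp ((finSuccEquiv ℤ 3).toAlgHom.toRingHom)
      = ((aeval g' : Pz4 →ₐ[ℤ] Pz4) : Pz4 →+* Pz4) := by
    apply MvPolynomial.ringHom_ext
    · intro r
      show Fh (finSuccEquiv ℤ 3 (C r)) = aeval g' (C r)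
      rw [finSuccEquiv_apply, eval₂Hom_C, RingHom.comp_apply, Fh_C, aeval_C, aeval_C]
    · intro i
      show Fh (finSuccEquiv ℤ 3 (X i)) = aeval g' (X i)
      refine Fin.cases ?_ ?_ i
      · rw [finSuccEquiv_X_zero, Fh_X, aeval_X]
        rfl
      · intro j
        rw [finSuccEquiv_X_succ, Fh_C, aeval_X, aeval_X]
        fin_cases j <;> rfl
  exact RingHom.congr_fun hhom p

lemma two_ne_zero' : (2 : Pz4) ≠ 0 := by
  intro h
  have h2 : (C (2 : ℤ) : Pz4) = 0 := by rw [map_ofNat]; exact h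
  rw [MvPolynomial.C_eq_zero] at h2
  norm_num at h2

lemma hv_mem (s : Pz3) : aeval hv s ∈ (aeval g' : Pz4 →ₐ[ℤ] Pz4).range := by
  refine ⟨rename Fin.succ s, ?_⟩
  show aeval g' (rename Fin.succ s) = aeval hv s
  rw [aeval_rename]
  have : g' ∘ Fin.succ = hv := by
    funext j
    fin_cases j <;> rfl
  rw [this]

lemma alpha3_mem : alpha3 ∈ (aeval g' : Pz4 →ₐ[ℤ] Pz4).range :=
  ⟨X 0, by show aeval g' (X 0) = alpha3; rw [aeval_X]; rfl⟩

lemma Gv_mem : Gv ∈ (aeval g' : Pz4 →ₐ[ℤ] Pz4).range := by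
  refine ⟨14 * (X 0) ^ 2 - 24 * (X 1 * X 2) - 32 * (X 3), ?_⟩
  show aeval g' (14 * (X 0) ^ 2 - 24 * (X 1 * X 2) - 32 * (X 3)) = Gv
  rw [map_sub, map_sub, map_mul, map_mul, map_mul, map_pow, map_mul, map_ofNat, map_ofNat,
    map_ofNat, aeval_X, aeval_X, aeval_X, aeval_X]
  rfl

lemma Fh_mem (q : Polynomial Pz3) : Fh q ∈ (aeval g' : Pz4 →ₐ[ℤ] Pz4).range := by
  induction q using Polynomial.induction_on with
  | C a => rw [Fh_C]; exact hv_mem a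
  | add p q hp hq => rw [map_add]; exact add_mem hp hq
  | monomial n a ih =>
    rw [pow_succ, ← mul_assoc, map_mul, Fh_X]
    exact mul_mem ih alpha3_mem


lemma set_eq : ({alpha2, alpha3, alpha4, alpha6} : Set Pz4) = Set.range g' := by
  apply Set.eq_of_subset_of_subset
  · intro x hx
    simp only [Set.mem_insert_iff, Set.mem_singleton_iff] at hx
    rcases hx with rfl | rfl | rfl | rfl
    · exact ⟨1, rfl⟩
    · exact ⟨0, rfl⟩
    · exact ⟨2, rfl⟩
    · exact ⟨3, rfl⟩
  · rintro x ⟨i, rfl⟩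
    fin_cases i
    · show g' 0 ∈ _
      simp [g']
    · show g' 1 ∈ _
      simp [g']
    · show g' 2 ∈ _
      simp [g']
    · show g' 3 ∈ _
      simp [g']

lemma main (f : Pz4) (h2 : 2 * f ∈ Algebra.adjoin ℤ {alpha2, alpha3, alpha4, alpha6}) :
    f ∈ Algebra.adjoin ℤ {alpha2, alpha3, alpha4, alpha6} := by
  rw [set_eq, Algebra.adjoin_range_eq_range_aeval] at h2 ⊢
  obtain ⟨P, hP⟩ := h2
  have hP' : aeval g' P = 2 * f := hP
  -- divide by the monic polynomial m = X^2 - C (x0^3)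
  set m : Polynomial Pz3 := Polynomial.X ^ 2 - Polynomial.C ((X 0 : Pz3) ^ 3) with hm_def
  have hm : m.Monic := Polynomial.monic_X_pow_sub_C _ two_ne_zero
  set p4 : Polynomial Pz3 := finSuccEquiv ℤ 3 P with hp4_def
  set r : Polynomial Pz3 := p4 %ₘ m with hr_def
  set qq : Polynomial Pz3 := p4 /ₘ m with hq_def
  have hdiv : r + m * qq = p4 := Polynomial.modByMonic_add_div p4 m
  have hdeg2 : r.degree < 2 := by
    have := Polynomial.degree_modByMonic_lt p4 hm
    rwa [hm_def, Polynomial.degree_X_pow_sub_C (by norm_num)] at this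
  have hdeg : r.degree ≤ 1 := by
    rcases hd : r.degree with _ | n
    · exact bot_le
    · rw [hd, show ((2 : WithBot ℕ)) = ((2 : ℕ) : WithBot ℕ) by decide] at hdeg2
      have hn : n < 2 := WithBot.coe_lt_coe.mp hdeg2
      show ((n : ℕ) : WithBot ℕ) ≤ ((1 : ℕ) : WithBot ℕ)
      exact WithBot.coe_le_coe.mpr (Nat.lt_succ_iff.mp hn)
  have hr : r = Polynomial.C (r.coeff 1) * Polynomial.X + Polynomial.C (r.coeff 0) :=
    Polynomial.eq_X_add_C_of_degree_le_one hdeg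
  -- apply Fh
  have hFm : Fh m = 2 * Gv := by
    rw [hm_def, map_sub, map_pow, Fh_X, Fh_C, map_pow, aeval_X]
    have h0 : hv 0 = alpha2 := rfl
    rw [h0, idA]
  have hsplit : Fh r + Fh m * Fh qq = 2 * f := by
    have := congrArg Fh hdiv
    rw [map_add, map_mul] at this
    rw [this, hp4_def, Fh_finSuccEquiv, hP']
  have hFr : Fh r = aeval hv (r.coeff 1) * alpha3 + aeval hv (r.coeff 0) := by
    conv_lhs => rw [hr]
    rw [map_add, map_mul, Fh_C, Fh_C, Fh_X]
  -- extract divisibility of the remainder coefficients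
  have hkey : aeval hv (r.coeff 0) + aeval hv (r.coeff 1) * alpha3
      = 2 * (f - Gv * Fh qq) := by
    rw [hFm, hFr] at hsplit
    linear_combination hsplit
  obtain ⟨s0, s1, hs0, hs1⟩ := key3 (r.coeff 0) (r.coeff 1) _ hkey
  -- conclude
  have hf : f = aeval hv s1 * alpha3 + aeval hv s0 + Gv * Fh qq := by
    apply mul_left_cancel₀ two_ne_zero'
    rw [← hsplit, hFm, hFr, hs0, hs1]
    have e0 : aeval hv (2 * s0) = 2 * aeval hv s0 := by
      rw [map_mul, map_ofNat]
    have e1 : aeval hv (2 * s1) = 2 * aeval hv s1 := by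
      rw [map_mul, map_ofNat]
    rw [e0, e1]
    ring
  rw [hf]
  exact add_mem (add_mem (mul_mem (hv_mem s1) alpha3_mem) (hv_mem s0))
    (mul_mem Gv_mem (Fh_mem qq))

end

end TwoFAux

/-- If f ∈ K_4 = ker(∇) ∩ Λ_4 and 2f ∈ ℤ[α_2,α_3,α_4,α_6], then f ∈ ℤ[α_2,α_3,α_4,α_6]. -/
theorem two_f_in_adjoin (f : MvPolynomial (Fin 4) ℤ) (hsym : f.IsSymmetric)
    (hker : ∑ i : Fin 4, pderiv i f = 0)
    (h2 : 2 * f ∈ Algebra.adjoin ℤ {alpha2, alpha3, alpha4, alpha6}) :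
    f ∈ Algebra.adjoin ℤ {alpha2, alpha3, alpha4, alpha6} :=
  TwoFAux.main f h2
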